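/- Suppose the kernel functions K_1,…,K_n are singular and J is an arbitrary n-field function. Then for each j ∈ {0,1,…,n} the interval maximum function m_j : S̄ → ℝ ∪ {-∞} is continuous in the extended sense: whenever x_k → y in S̄, one has m_j(x_k) → m_j(y) in [-∞, +∞). -/

import Mathlib

open Set Filter
open scoped BigOperators Topology

noncomputable section

/-- The real part of an extended-real-valued function. -/
def toR (K : ℝ → EReal) : ℝ → ℝ := fun t => (K t).toReal

/-- A *kernel function*: finite-valued, continuous and concave on `[-1,0)` and `(0,1]`,
never `+∞`, and with coinciding one-sided limits at `0` (given by the value `K 0`). -/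
structure IsKernel (K : ℝ → EReal) : Prop where
  ne_top : ∀ t, K t ≠ ⊤
  finite_left : ∀ t ∈ Ico (-1:ℝ) 0, K t ≠ ⊥
  finite_right : ∀ t ∈ Ioc (0:ℝ) 1, K t ≠ ⊥
  cont_left : ContinuousOn (toR K) (Ico (-1:ℝ) 0)
  cont_right : ContinuousOn (toR K) (Ioc (0:ℝ) 1)
  concave_left : ConcaveOn ℝ (Ico (-1:ℝ) 0) (toR K)
  concave_right : ConcaveOn ℝ (Ioc (0:ℝ) 1) (toR K)
  tendsto_left : Tendsto K (nhdsWithin 0 (Iio 0)) (nhds (K 0))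
  tendsto_right : Tendsto K (nhdsWithin 0 (Ioi 0)) (nhds (K 0))

/-- Left one-sided derivative. -/
def Dm (f : ℝ → ℝ) (t : ℝ) : ℝ := derivWithin f (Iio t) t

/-- Right one-sided derivative. -/
def Dp (f : ℝ → ℝ) (t : ℝ) : ℝ := derivWithin f (Ioi t) t

/-- Condition (PM_c): periodized `c`-monotonicity. -/
def PMcond (K : ℝ → EReal) (c : ℝ) : Prop :=
  ∀ t ∈ Ioo (0:ℝ) 1, c ≤ Dm (toR K) t - Dm (toR K) (t - 1)

/-- An *n-field function*: bounded above, never `+∞`, finite at more than `n` points of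
`[0,1]`, where the endpoints count with weight `1/2`. -/
structure IsNField (n : ℕ) (J : ℝ → EReal) : Prop where
  ne_top : ∀ t, J t ≠ ⊤
  bdd : ∃ M : ℝ, ∀ t ∈ Icc (0:ℝ) 1, J t ≤ (M : EReal)
  count : (∃ T : Finset ℝ, ↑T ⊆ {t | t ∈ Ioo (0:ℝ) 1 ∧ J t ≠ ⊥} ∧ n + 1 ≤ T.card) ∨
    ((∃ T : Finset ℝ, ↑T ⊆ {t | t ∈ Ioo (0:ℝ) 1 ∧ J t ≠ ⊥} ∧ n ≤ T.card) ∧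
      (J 0 ≠ ⊥ ∨ J 1 ≠ ⊥))

/-- The open simplex `S`. -/
def openSimplex (n : ℕ) : Set (Fin n → ℝ) :=
  {y | StrictMono y ∧ ∀ i, y i ∈ Ioo (0:ℝ) 1}

/-- The closed simplex `S̄`. -/
def closedSimplex (n : ℕ) : Set (Fin n → ℝ) :=
  {y | Monotone y ∧ ∀ i, y i ∈ Icc (0:ℝ) 1}

/-- The left endpoint `y_j` of `I_j(y)`, with the convention `y_0 = 0`. -/
def nodeLo {n : ℕ} (y : Fin n → ℝ) (j : ℕ) : ℝ :=
  if h : 0 < j ∧ j ≤ n then y ⟨j - 1, by omega⟩ else 0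

/-- The right endpoint `y_{j+1}` of `I_j(y)`, with the convention `y_{n+1} = 1`. -/
def nodeHi {n : ℕ} (y : Fin n → ℝ) (j : ℕ) : ℝ :=
  if h : j < n then y ⟨j, h⟩ else 1

/-- The interval `I_j(y) = [y_j, y_{j+1}]`. -/
def Ij {n : ℕ} (y : Fin n → ℝ) (j : ℕ) : Set ℝ := Icc (nodeLo y j) (nodeHi y j)

/-- The sum of translates function `F(y,t) = J(t) + ∑ K_j(t - y_j)`. -/
def SOT {n : ℕ} (K : Fin n → ℝ → EReal) (J : ℝ → EReal) (y : Fin n → ℝ) (t : ℝ) : EReal :=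
  J t + ∑ i, K i (t - y i)

/-- The interval maximum `m_j(y) = sup_{t ∈ I_j(y)} F(y,t)`. -/
def mj {n : ℕ} (K : Fin n → ℝ → EReal) (J : ℝ → EReal) (y : Fin n → ℝ) (j : ℕ) : EReal :=
  ⨆ t ∈ Ij y j, SOT K J y t

/-- The regularity set `Y`. -/
def regSet {n : ℕ} (K : Fin n → ℝ → EReal) (J : ℝ → EReal) : Set (Fin n → ℝ) :=
  {y ∈ openSimplex n | ∀ j ≤ n, mj K J y j ≠ ⊥}

/-- The difference function `Φ(y) = (m_1 - m_0, …, m_n - m_{n-1})`. -/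
def PhiFun {n : ℕ} (K : Fin n → ℝ → EReal) (J : ℝ → EReal) (y : Fin n → ℝ) : Fin n → ℝ :=
  fun i => (mj K J y ((i : ℕ) + 1)).toReal - (mj K J y (i : ℕ)).toReal

/-- A map between (pseudo)metric spaces is *locally bi-Lipschitz* if every point has a
neighborhood on which the map is a bi-Lipschitz homeomorphism onto its image. -/
def LocallyBiLipschitz {α β : Type*} [PseudoMetricSpace α] [PseudoMetricSpace β]
    (f : α → β) : Prop :=
  ∀ x : α, ∃ U ∈ 𝓝 x, ∃ c C : ℝ, 0 < c ∧ ∀ a ∈ U, ∀ b ∈ U,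
    c * dist a b ≤ dist (f a) (f b) ∧ dist (f a) (f b) ≤ C * dist a b

/-- The relative interior of `[a,b] ⊆ [0,1]` in the space `[0,1]`. -/
def relIntIcc (a b : ℝ) : Set ℝ :=
  (if a = 0 then Ici a else Ioi a) ∩ (if b = 1 then Iic b else Iio b)

/-- Condition `(∞₊)`. -/
def CondInfPlus (J : ℝ → EReal) : Prop :=
  J 0 = ⊥ ∧ Tendsto J (nhdsWithin 0 (Ioi 0)) (nhds ⊥)

/-- Condition `(∞₋)`. -/
def CondInfMinus (J : ℝ → EReal) : Prop :=
  J 1 = ⊥ ∧ Tendsto J (nhdsWithin 1 (Iio 1)) (nhds ⊥)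

/-- Fenton's cusp condition `(∞'₊)`. -/
def CuspPlus (J : ℝ → EReal) : Prop :=
  ∀ M : ℝ, ∃ δ > (0:ℝ), ∀ s t : ℝ, 0 ≤ s → s < t → t ≤ δ →
    J s ≠ ⊥ → J t ≠ ⊥ → M ≤ ((J t).toReal - (J s).toReal) / (t - s)

/-- Fenton's cusp condition `(∞'₋)`. -/
def CuspMinus (J : ℝ → EReal) : Prop :=
  ∀ M : ℝ, ∃ δ > (0:ℝ), ∀ t s : ℝ, 1 - δ ≤ t → t < s → s ≤ 1 →
    J s ≠ ⊥ → J t ≠ ⊥ → ((J t).toReal - (J s).toReal) / (t - s) ≤ -M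

/-- `L : [0,1] → [0,∞)` is log-concave:
`L(λs + (1-λ)t) ≥ L(s)^λ L(t)^{1-λ}`. -/
def LogConcaveOn01 (L : ℝ → ℝ) : Prop :=
  ∀ s ∈ Icc (0:ℝ) 1, ∀ t ∈ Icc (0:ℝ) 1, ∀ l ∈ Icc (0:ℝ) 1,
    L s ^ l * L t ^ (1 - l) ≤ L (l * s + (1 - l) * t)


section AuxLemmas

lemma kernel_ne_bot {K : ℝ → EReal} (hK : IsKernel K) {s : ℝ}
    (hs : s ∈ Icc (-1:ℝ) 1) (hs0 : s ≠ 0) : K s ≠ ⊥ := by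
  rcases lt_or_gt_of_ne hs0 with h | h
  · exact hK.finite_left s ⟨hs.1, h⟩
  · exact hK.finite_right s ⟨h, hs.2⟩

lemma kernel_coe {K : ℝ → EReal} (hK : IsKernel K) {s : ℝ}
    (hs : s ∈ Icc (-1:ℝ) 1) (hs0 : s ≠ 0) : K s = ((toR K s : ℝ) : EReal) :=
  (EReal.coe_toReal (hK.ne_top s) (kernel_ne_bot hK hs hs0)).symm

lemma Icc_inter_Iio : Icc (-1:ℝ) 1 ∩ Iio 0 = Ico (-1:ℝ) 0 := by
  ext t
  refine ⟨fun h => ⟨h.1.1, h.2⟩, fun h => ⟨⟨h.1, ?_⟩, h.2⟩⟩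
  nlinarith [h.2]

lemma Icc_inter_Ioi : Icc (-1:ℝ) 1 ∩ Ioi 0 = Ioc (0:ℝ) 1 := by
  ext t
  refine ⟨fun h => ⟨h.2, h.1.2⟩, fun h => ⟨⟨?_, h.2⟩, h.1⟩⟩
  nlinarith [h.1]

lemma kernel_contOn {K : ℝ → EReal} (hK : IsKernel K) (h0 : K 0 = ⊥) :
    ContinuousOn K (Icc (-1:ℝ) 1) := by
  intro s hs
  rcases lt_trichotomy s 0 with h | h | h
  · have hmem : s ∈ Ico (-1:ℝ) 0 := ⟨hs.1, h⟩
    have h1 : ContinuousWithinAt K (Ico (-1:ℝ) 0) s := by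
      have h2 : ContinuousWithinAt (fun t => ((toR K t : ℝ) : EReal)) (Ico (-1:ℝ) 0) s :=
        continuous_coe_real_ereal.continuousAt.comp_continuousWithinAt (hK.cont_left s hmem)
      exact h2.congr (fun t ht => kernel_coe hK ⟨ht.1, by linarith [ht.2]⟩ (ne_of_lt ht.2))
        (kernel_coe hK hs (ne_of_lt h))
    rw [ContinuousWithinAt, nhdsWithin_restrict' (Icc (-1:ℝ) 1) (Iio_mem_nhds h),
      Icc_inter_Iio]
    exact h1
  · subst h
    rw [ContinuousWithinAt, h0]
    have hsub : Icc (-1:ℝ) 1 ⊆ Iio 0 ∪ (Ioi 0 ∪ {0}) := by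
      intro t _
      rcases lt_trichotomy t 0 with h | h | h
      · exact Or.inl h
      · exact Or.inr (Or.inr (by simp [h]))
      · exact Or.inr (Or.inl h)
    have hle : nhdsWithin (0:ℝ) (Icc (-1:ℝ) 1) ≤
        nhdsWithin 0 (Iio 0) ⊔ (nhdsWithin 0 (Ioi 0) ⊔ nhdsWithin 0 {0}) := by
      rw [← nhdsWithin_union, ← nhdsWithin_union]
      exact nhdsWithin_mono 0 hsub
    refine Tendsto.mono_left ?_ hle
    rw [tendsto_sup]
    constructor
    · rw [← h0]; exact hK.tendsto_left
    rw [tendsto_sup]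
    constructor
    · rw [← h0]; exact hK.tendsto_right
    · rw [nhdsWithin_singleton]
      conv in (𝓝 _) => rw [← h0]
      exact tendsto_pure_nhds K 0
  · have hmem : s ∈ Ioc (0:ℝ) 1 := ⟨h, hs.2⟩
    have h1 : ContinuousWithinAt K (Ioc (0:ℝ) 1) s := by
      have h2 : ContinuousWithinAt (fun t => ((toR K t : ℝ) : EReal)) (Ioc (0:ℝ) 1) s :=
        continuous_coe_real_ereal.continuousAt.comp_continuousWithinAt (hK.cont_right s hmem)
      exact h2.congr (fun t ht => kernel_coe hK ⟨by linarith [ht.1], ht.2⟩ (ne_of_gt ht.1))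
        (kernel_coe hK hs (ne_of_gt h))
    rw [ContinuousWithinAt, nhdsWithin_restrict' (Icc (-1:ℝ) 1) (Ioi_mem_nhds h),
      Icc_inter_Ioi]
    exact h1

lemma kernel_bound {K : ℝ → EReal} (hK : IsKernel K) (h0 : K 0 = ⊥) :
    ∃ M : ℝ, 0 ≤ M ∧ ∀ s ∈ Icc (-1:ℝ) 1, K s ≤ (M : EReal) := by
  obtain ⟨s₀, hs₀, hmax⟩ := isCompact_Icc.exists_isMaxOn
    (nonempty_Icc.2 (by norm_num)) (kernel_contOn hK h0)
  refine ⟨max (K s₀).toReal 0, le_max_right _ _, fun s hs => (hmax hs).trans ?_⟩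
  rcases eq_or_ne (K s₀) ⊥ with h | h
  · simp [h]
  · rw [← EReal.coe_toReal (hK.ne_top s₀) h]
    exact_mod_cast le_max_left _ _

lemma kernel_small {K : ℝ → EReal} (hK : IsKernel K) (h0 : K 0 = ⊥) (C : ℝ) :
    ∃ δ > (0:ℝ), ∀ s ∈ Icc (-1:ℝ) 1, |s| ≤ δ → K s ≤ (C : EReal) := by
  have h := (kernel_contOn hK h0) 0 (by norm_num)
  rw [ContinuousWithinAt, h0] at h
  have hev : ∀ᶠ s in nhdsWithin 0 (Icc (-1:ℝ) 1), K s < (C : EReal) :=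
    h.eventually_lt_const (EReal.bot_lt_coe C)
  rw [Metric.nhdsWithin_basis_ball.eventually_iff] at hev
  obtain ⟨ε, hε, h2⟩ := hev
  refine ⟨ε/2, by linarith, fun s hs habs => (h2 ⟨Metric.mem_ball.2 ?_, hs⟩).le⟩
  rw [Real.dist_eq, sub_zero]
  linarith [habs]

lemma nodeLo_mem {n : ℕ} {y : Fin n → ℝ} (hy : y ∈ closedSimplex n) (j : ℕ) :
    nodeLo y j ∈ Icc (0:ℝ) 1 := by
  unfold nodeLo
  split
  · exact hy.2 _
  · norm_num

lemma nodeHi_mem {n : ℕ} {y : Fin n → ℝ} (hy : y ∈ closedSimplex n) (j : ℕ) :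
    nodeHi y j ∈ Icc (0:ℝ) 1 := by
  unfold nodeHi
  split
  · exact hy.2 _
  · norm_num

lemma Ij_subset {n : ℕ} {y : Fin n → ℝ} (hy : y ∈ closedSimplex n) {j : ℕ} {t : ℝ}
    (ht : t ∈ Ij y j) : t ∈ Icc (0:ℝ) 1 :=
  ⟨(nodeLo_mem hy j).1.trans ht.1, ht.2.trans (nodeHi_mem hy j).2⟩

lemma ereal_coe_sum {ι : Type*} (s : Finset ι) (f : ι → ℝ) :
    ((∑ i ∈ s, f i : ℝ) : EReal) = ∑ i ∈ s, ((f i : ℝ) : EReal) := by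
  classical
  induction s using Finset.induction_on with
  | empty => simp
  | insert a s h ih => rw [Finset.sum_insert h, Finset.sum_insert h, EReal.coe_add, ih]

lemma sub_mem_Icc {t a : ℝ} (ht : t ∈ Icc (0:ℝ) 1) (ha : a ∈ Icc (0:ℝ) 1) :
    t - a ∈ Icc (-1:ℝ) 1 := by
  constructor <;> [linarith [ht.1, ha.2]; linarith [ht.2, ha.1]]

lemma sot_le_B {n : ℕ} {K : Fin n → ℝ → EReal} {J : ℝ → EReal} {MJ : ℝ} {MK : Fin n → ℝ}
    (hMJ : ∀ t ∈ Icc (0:ℝ) 1, J t ≤ (MJ : EReal))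
    (hMKb : ∀ i, ∀ s ∈ Icc (-1:ℝ) 1, K i s ≤ (MK i : EReal))
    {x : Fin n → ℝ} (hx : x ∈ closedSimplex n) {t : ℝ} (ht : t ∈ Icc (0:ℝ) 1) :
    SOT K J x t ≤ ((MJ + ∑ i, MK i : ℝ) : EReal) := by
  rw [EReal.coe_add, ereal_coe_sum]
  exact add_le_add (hMJ t ht)
    (Finset.sum_le_sum fun i _ => hMKb i _ (sub_mem_Icc ht (hx.2 i)))

lemma sot_le_one {n : ℕ} {K : Fin n → ℝ → EReal} {J : ℝ → EReal} {MJ : ℝ} {MK : Fin n → ℝ}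
    (hMJ : ∀ t ∈ Icc (0:ℝ) 1, J t ≤ (MJ : EReal)) (hMK0 : ∀ i, 0 ≤ MK i)
    (hMKb : ∀ i, ∀ s ∈ Icc (-1:ℝ) 1, K i s ≤ (MK i : EReal))
    {x : Fin n → ℝ} (hx : x ∈ closedSimplex n) {t : ℝ} (ht : t ∈ Icc (0:ℝ) 1)
    (i0 : Fin n) {c : ℝ} (hc : K i0 (t - x i0) ≤ (c : EReal)) :
    SOT K J x t ≤ ((MJ + (∑ i, MK i) + c : ℝ) : EReal) := by
  classical
  have hsum : (∑ i, K i (t - x i)) ≤ ((c + ∑ i ∈ Finset.univ.erase i0, MK i : ℝ) : EReal) := by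
    rw [← Finset.add_sum_erase _ _ (Finset.mem_univ i0), EReal.coe_add, ereal_coe_sum]
    exact add_le_add hc
      (Finset.sum_le_sum fun i _ => hMKb i _ (sub_mem_Icc ht (hx.2 i)))
  have h2 : (∑ i ∈ Finset.univ.erase i0, MK i) ≤ ∑ i, MK i :=
    Finset.sum_le_sum_of_subset_of_nonneg (Finset.erase_subset _ _) fun i _ _ => hMK0 i
  calc SOT K J x t = J t + ∑ i, K i (t - x i) := rfl
    _ ≤ (MJ : EReal) + ((c + ∑ i ∈ Finset.univ.erase i0, MK i : ℝ) : EReal) :=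
        add_le_add (hMJ t ht) hsum
    _ = ((MJ + (c + ∑ i ∈ Finset.univ.erase i0, MK i) : ℝ) : EReal) := by
        norm_cast
    _ ≤ _ := by exact_mod_cast by linarith

end AuxLemmas
/-- (Lemma 3.3 / `lem:mjcont2`.) For singular kernels and an arbitrary
`n`-field function, each interval maximum function `m_j : S̄ → ℝ ∪ {-∞}` is continuous in
the extended sense (with values in `EReal`, never `+∞`). -/
theorem interval_maxima_continuous
    {n : ℕ} (hn : 1 ≤ n) (K : Fin n → ℝ → EReal) (J : ℝ → EReal)
    (hK : ∀ i, IsKernel (K i)) (hsing : ∀ i, K i 0 = ⊥) (hJ : IsNField n J) :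
    ∀ j ≤ n,
      (∀ y ∈ closedSimplex n, mj K J y j ≠ ⊤) ∧
      ContinuousOn (fun y => mj K J y j) (closedSimplex n) := by
  classical
  intro j hj
  haveI hFinN : Nonempty (Fin n) := ⟨⟨0, by omega⟩⟩
  obtain ⟨MJ, hMJ⟩ := hJ.bdd
  choose MK hMK0 hMKb using fun i => kernel_bound (hK i) (hsing i)
  set B : ℝ := MJ + ∑ i, MK i with hB
  have hmjB : ∀ x ∈ closedSimplex n, mj K J x j ≤ (B : EReal) := by
    intro x hx
    exact iSup₂_le fun t ht => sot_le_B hMJ hMKb hx (Ij_subset hx ht)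
  constructor
  · intro x hx
    exact ((hmjB x hx).trans_lt (EReal.coe_lt_top B)).ne
  intro y hy
  rw [ContinuousWithinAt, tendsto_order]
  constructor
  · -- lower semicontinuity
    intro u hu
    obtain ⟨t₀, ht₀I, ht₀⟩ : ∃ t₀ ∈ Ij y j, u < SOT K J y t₀ := by
      by_contra h
      push_neg at h
      exact absurd (iSup₂_le h) (not_le.2 hu)
    have ht01 : t₀ ∈ Icc (0:ℝ) 1 := Ij_subset hy ht₀I
    have hbot : SOT K J y t₀ ≠ ⊥ := by
      intro h
      rw [h] at ht₀
      exact not_lt_bot ht₀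
    have hJb : J t₀ ≠ ⊥ := by
      intro h
      exact hbot (by simp [SOT, h])
    have hKb : ∀ i, K i (t₀ - y i) ≠ ⊥ := by
      intro i h
      apply hbot
      have h2 : (∑ i', K i' (t₀ - y i')) = ⊥ := by
        rw [← Finset.add_sum_erase _ _ (Finset.mem_univ i), h, EReal.bot_add]
      simp [SOT, h2]
    have hne0 : ∀ i, t₀ - y i ≠ 0 := fun i h => hKb i (by rw [h, hsing i])
    have hlo : ∀ᶠ x in nhdsWithin y (closedSimplex n), nodeLo x j ≤ t₀ := by
      by_cases h : 0 < j ∧ j ≤ n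
      · have h1 : y ⟨j-1, by omega⟩ < t₀ := by
          have h2 : nodeLo y j = y ⟨j-1, by omega⟩ := dif_pos h
          have h3 := ht₀I.1
          rw [h2] at h3
          rcases h3.lt_or_eq with h4 | h4
          · exact h4
          · exact absurd (by rw [h4, sub_self]) (hne0 ⟨j-1, by omega⟩)
        have h5 : Tendsto (fun x : Fin n → ℝ => x ⟨j-1, by omega⟩)
            (nhdsWithin y (closedSimplex n)) (nhds (y ⟨j-1, by omega⟩)) :=
          (continuous_apply _).continuousWithinAt
        filter_upwards [h5.eventually_lt_const h1] with x hx
        unfold nodeLo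
        rw [dif_pos h]
        exact hx.le
      · filter_upwards with x
        unfold nodeLo
        rw [dif_neg h]
        exact ht01.1
    have hhi : ∀ᶠ x in nhdsWithin y (closedSimplex n), t₀ ≤ nodeHi x j := by
      by_cases h : j < n
      · have h1 : t₀ < y ⟨j, h⟩ := by
          have h2 : nodeHi y j = y ⟨j, h⟩ := dif_pos h
          have h3 := ht₀I.2
          rw [h2] at h3
          rcases h3.lt_or_eq with h4 | h4
          · exact h4
          · exact absurd (by rw [← h4, sub_self]) (hne0 ⟨j, h⟩)
        have h5 : Tendsto (fun x : Fin n → ℝ => x ⟨j, h⟩)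
            (nhdsWithin y (closedSimplex n)) (nhds (y ⟨j, h⟩)) :=
          (continuous_apply _).continuousWithinAt
        filter_upwards [h5.eventually_const_lt h1] with x hx
        unfold nodeHi
        rw [dif_pos h]
        exact hx.le
      · filter_upwards with x
        unfold nodeHi
        rw [dif_neg h]
        exact ht01.2
    have hterm : ∀ i : Fin n,
        Tendsto (fun x : Fin n → ℝ => toR (K i) (t₀ - x i)) (nhdsWithin y (closedSimplex n))
          (nhds (toR (K i) (t₀ - y i))) ∧
        (∀ᶠ x in nhdsWithin y (closedSimplex n),
          (t₀ - x i) ∈ Icc (-1:ℝ) 1 ∧ t₀ - x i ≠ 0) := by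
      intro i
      have htends : Tendsto (fun x : Fin n → ℝ => t₀ - x i) (nhdsWithin y (closedSimplex n))
          (nhds (t₀ - y i)) :=
        (continuous_const.sub (continuous_apply i)).continuousWithinAt
      rcases lt_or_gt_of_ne (hne0 i) with hneg | hpos
      · have hmem : ∀ᶠ x in nhdsWithin y (closedSimplex n), t₀ - x i ∈ Ico (-1:ℝ) 0 := by
          filter_upwards [htends.eventually_lt_const hneg, eventually_mem_nhdsWithin]
            with x hx1 hx2
          exact ⟨by linarith [ht01.1, (hx2.2 i).2], hx1⟩
        constructor
        · have hcw := (hK i).cont_left (t₀ - y i)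
            ⟨by linarith [ht01.1, (hy.2 i).2], hneg⟩
          have hcomp := Filter.Tendsto.comp (g := toR (K i)) hcw
            (tendsto_nhdsWithin_iff.2 ⟨htends, hmem⟩)
          exact hcomp
        · filter_upwards [hmem] with x hx
          exact ⟨⟨hx.1, by linarith [hx.2]⟩, ne_of_lt hx.2⟩
      · have hmem : ∀ᶠ x in nhdsWithin y (closedSimplex n), t₀ - x i ∈ Ioc (0:ℝ) 1 := by
          filter_upwards [htends.eventually_const_lt hpos, eventually_mem_nhdsWithin]
            with x hx1 hx2
          exact ⟨hx1, by linarith [ht01.2, (hx2.2 i).1]⟩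
        constructor
        · have hcw := (hK i).cont_right (t₀ - y i)
            ⟨hpos, by linarith [ht01.2, (hy.2 i).1]⟩
          have hcomp := Filter.Tendsto.comp (g := toR (K i)) hcw
            (tendsto_nhdsWithin_iff.2 ⟨htends, hmem⟩)
          exact hcomp
        · filter_upwards [hmem] with x hx
          exact ⟨⟨by linarith [hx.1], hx.2⟩, ne_of_gt hx.1⟩
    have hJt : J t₀ = (((J t₀).toReal : ℝ) : EReal) := (EReal.coe_toReal (hJ.ne_top t₀) hJb).symm
    have hSOTy : SOT K J y t₀ =
        (((J t₀).toReal + ∑ i, toR (K i) (t₀ - y i) : ℝ) : EReal) := by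
      rw [SOT, EReal.coe_add, ereal_coe_sum, ← hJt]
      congr 1
      exact Finset.sum_congr rfl fun i _ => kernel_coe (hK i) (sub_mem_Icc ht01 (hy.2 i)) (hne0 i)
    have hlim : Tendsto
        (fun x : Fin n → ℝ => (((J t₀).toReal + ∑ i, toR (K i) (t₀ - x i) : ℝ) : EReal))
        (nhdsWithin y (closedSimplex n)) (nhds (SOT K J y t₀)) := by
      rw [hSOTy]
      exact EReal.tendsto_coe.2
        (tendsto_const_nhds.add (tendsto_finset_sum _ fun i _ => (hterm i).1))
    have heq : ∀ᶠ x in nhdsWithin y (closedSimplex n),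
        SOT K J x t₀ = (((J t₀).toReal + ∑ i, toR (K i) (t₀ - x i) : ℝ) : EReal) := by
      filter_upwards [eventually_all.2 fun i => (hterm i).2] with x hx
      rw [SOT, EReal.coe_add, ereal_coe_sum, ← hJt]
      congr 1
      exact Finset.sum_congr rfl fun i _ => kernel_coe (hK i) (hx i).1 (hx i).2
    filter_upwards [hlim.eventually_const_lt ht₀, heq, hlo, hhi] with x h1 h2 h3 h4
    calc u < SOT K J x t₀ := by rw [h2]; exact h1
      _ ≤ mj K J x j := le_iSup₂ (f := fun t (_ : t ∈ Ij x j) => SOT K J x t) t₀ ⟨h3, h4⟩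

  · -- upper semicontinuity
    intro v hv
    rcases eq_or_ne v ⊤ with rfl | hvt
    · filter_upwards [eventually_mem_nhdsWithin] with x hx
      exact (hmjB x hx).trans_lt (EReal.coe_lt_top B)
    obtain ⟨w', hw1, hw2⟩ := exists_between hv
    obtain ⟨w₂', hw21, hw22⟩ := exists_between hw1
    have hw'ne : w' ≠ ⊤ := (hw2.trans (lt_top_iff_ne_top.2 hvt)).ne
    have hw'nb : w' ≠ ⊥ := (bot_le.trans_lt hw1).ne'
    have hw2ne : w₂' ≠ ⊤ := (hw22.trans (lt_top_iff_ne_top.2 hw'ne)).ne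
    have hw2nb : w₂' ≠ ⊥ := (bot_le.trans_lt hw21).ne'
    set w : ℝ := w'.toReal with hwdef
    set w₂ : ℝ := w₂'.toReal with hw2def
    have hwe : (w : EReal) = w' := EReal.coe_toReal hw'ne hw'nb
    have hw2e : (w₂ : EReal) = w₂' := EReal.coe_toReal hw2ne hw2nb
    have hww2 : w₂ < w := by
      rw [← EReal.coe_lt_coe_iff, hwe, hw2e]
      exact hw22
    have hn0 : (0:ℝ) < (n:ℝ) := by exact_mod_cast Nat.pos_of_ne_zero (by omega)
    have hεpos : 0 < (w - w₂)/(n:ℝ) := div_pos (by linarith) hn0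
    choose δK hδK0 hδKb using fun i => kernel_small (hK i) (hsing i) (w - B)
    have Hne : (Finset.univ : Finset (Fin n)).Nonempty := Finset.univ_nonempty
    obtain ⟨δ, hδ0, hδle⟩ : ∃ δ > (0:ℝ), ∀ i, δ ≤ δK i :=
      ⟨Finset.univ.inf' Hne δK, (Finset.lt_inf'_iff Hne).2 fun i _ => hδK0 i,
        fun i => Finset.inf'_le _ (Finset.mem_univ i)⟩
    have hUCneg : ∀ i : Fin n, ∃ η > (0:ℝ), ∀ a ∈ Icc (-1:ℝ) (-(δ/2)),
        ∀ b ∈ Icc (-1:ℝ) (-(δ/2)),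
        dist a b < η → dist (toR (K i) a) (toR (K i) b) < (w - w₂)/(n:ℝ) := by
      intro i
      have hsub : Icc (-1:ℝ) (-(δ/2)) ⊆ Ico (-1:ℝ) 0 := fun s hs => ⟨hs.1, by
        have := hs.2; linarith⟩
      have huc := isCompact_Icc.uniformContinuousOn_of_continuous ((hK i).cont_left.mono hsub)
      rw [Metric.uniformContinuousOn_iff] at huc
      exact huc _ hεpos
    have hUCpos : ∀ i : Fin n, ∃ η > (0:ℝ), ∀ a ∈ Icc (δ/2) (1:ℝ), ∀ b ∈ Icc (δ/2) (1:ℝ),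
        dist a b < η → dist (toR (K i) a) (toR (K i) b) < (w - w₂)/(n:ℝ) := by
      intro i
      have hsub : Icc (δ/2) (1:ℝ) ⊆ Ioc (0:ℝ) 1 := fun s hs => ⟨by
        have := hs.1; linarith, hs.2⟩
      have huc := isCompact_Icc.uniformContinuousOn_of_continuous ((hK i).cont_right.mono hsub)
      rw [Metric.uniformContinuousOn_iff] at huc
      exact huc _ hεpos
    choose ηn hηn0 hηnb using hUCneg
    choose ηp hηp0 hηpb using hUCpos
    obtain ⟨r, hr0, hrδ, hrn, hrp⟩ :
        ∃ r > (0:ℝ), r ≤ δ/2 ∧ (∀ i, r ≤ ηn i) ∧ (∀ i, r ≤ ηp i) := by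
      refine ⟨min (δ/2) (Finset.univ.inf' Hne fun i => min (ηn i) (ηp i)), ?_,
        min_le_left _ _, fun i => ?_, fun i => ?_⟩
      · exact lt_min (by linarith)
          ((Finset.lt_inf'_iff Hne).2 fun i _ => lt_min (hηn0 i) (hηp0 i))
      · exact le_trans (min_le_right _ _)
          (le_trans (Finset.inf'_le _ (Finset.mem_univ i)) (min_le_left _ _))
      · exact le_trans (min_le_right _ _)
          (le_trans (Finset.inf'_le _ (Finset.mem_univ i)) (min_le_right _ _))
    have hball : Metric.ball y r ∈ nhdsWithin y (closedSimplex n) :=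
      mem_nhdsWithin_of_mem_nhds (Metric.ball_mem_nhds y hr0)
    filter_upwards [Filter.eventually_mem_set.2 hball, eventually_mem_nhdsWithin]
      with x hxr hxS
    have hdist : ∀ i, |x i - y i| < r := by
      intro i
      have h1 := dist_le_pi_dist x y i
      rw [Real.dist_eq] at h1
      exact h1.trans_lt (Metric.mem_ball.1 hxr)
    have key : ∀ t ∈ Ij x j, SOT K J x t ≤ (w : EReal) := by
      intro t ht
      have htx : t ∈ Icc (0:ℝ) 1 := Ij_subset hxS ht
      by_cases hL : 0 < j ∧ t < nodeLo x j + δ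
      · have hnl : nodeLo x j = x ⟨j-1, by omega⟩ := dif_pos ⟨hL.1, hj⟩
        have hxt : x ⟨j-1, by omega⟩ ≤ t := by rw [← hnl]; exact ht.1
        have hlt : t < x ⟨j-1, by omega⟩ + δ := by rw [← hnl]; exact hL.2
        have habs : |t - x ⟨j-1, by omega⟩| ≤ δ := by
          rw [abs_le]
          constructor <;> linarith
        have hc := hδKb ⟨j-1, by omega⟩ _ (sub_mem_Icc htx (hxS.2 _))
          (habs.trans (hδle _))
        refine (sot_le_one hMJ hMK0 hMKb hxS htx _ hc).trans ?_
        rw [EReal.coe_le_coe_iff, hB]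
        linarith
      by_cases hR : j < n ∧ nodeHi x j - δ < t
      · have hnh : nodeHi x j = x ⟨j, hR.1⟩ := dif_pos hR.1
        have hxt : t ≤ x ⟨j, hR.1⟩ := by rw [← hnh]; exact ht.2
        have hlt : x ⟨j, hR.1⟩ - δ < t := by rw [← hnh]; exact hR.2
        have habs : |t - x ⟨j, hR.1⟩| ≤ δ := by
          rw [abs_le]
          constructor <;> linarith
        have hc := hδKb ⟨j, hR.1⟩ _ (sub_mem_Icc htx (hxS.2 _)) (habs.trans (hδle _))
        refine (sot_le_one hMJ hMK0 hMKb hxS htx _ hc).trans ?_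
        rw [EReal.coe_le_coe_iff, hB]
        linarith
      push_neg at hL hR
      have hxarg : ∀ i : Fin n, ((i : ℕ) < j → δ ≤ t - x i) ∧ (j ≤ (i : ℕ) → t - x i ≤ -δ) := by
        intro i
        constructor
        · intro hij
          have h1 : x i ≤ x ⟨j-1, by omega⟩ := hxS.1 (by simp [Fin.le_def]; omega)
          have h3 := hL (by omega)
          have h2 : nodeLo x j = x ⟨j-1, by omega⟩ := dif_pos ⟨by omega, hj⟩
          rw [h2] at h3
          linarith
        · intro hij
          have hjn : j < n := lt_of_le_of_lt hij i.isLt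
          have h1 : x ⟨j, hjn⟩ ≤ x i := hxS.1 (by simp [Fin.le_def]; exact hij)
          have h3 := hR hjn
          have h2 : nodeHi x j = x ⟨j, hjn⟩ := dif_pos hjn
          rw [h2] at h3
          linarith
      have hyarg : ∀ i : Fin n, ((i:ℕ) < j → δ/2 ≤ t - y i) ∧ (j ≤ (i:ℕ) → t - y i ≤ -(δ/2)) := by
        intro i
        have hd := abs_lt.1 (hdist i)
        constructor
        · intro hij
          have h1 := (hxarg i).1 hij
          have h2 := hd.1
          linarith
        · intro hij
          have h1 := (hxarg i).2 hij
          have h2 := hd.2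
          linarith
      have hty : t ∈ Ij y j := by
        constructor
        · by_cases h : 0 < j ∧ j ≤ n
          · have h2 : nodeLo y j = y ⟨j-1, by omega⟩ := dif_pos h
            rw [Ij] at *
            rw [h2]
            have h3 := (hyarg ⟨j-1, by omega⟩).1 (by simp; omega)
            linarith
          · unfold nodeLo
            rw [dif_neg h]
            exact htx.1
        · by_cases h : j < n
          · have h2 : nodeHi y j = y ⟨j, h⟩ := dif_pos h
            rw [h2]
            have h3 := (hyarg ⟨j, h⟩).2 (by simp)
            linarith
          · unfold nodeHi
            rw [dif_neg h]
            exact htx.2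
      have hterm2 : ∀ i : Fin n,
          toR (K i) (t - x i) ≤ toR (K i) (t - y i) + (w - w₂)/(n:ℝ) := by
        intro i
        rcases lt_or_ge (i : ℕ) j with hij | hij
        · have h1 := (hxarg i).1 hij
          have h2 := (hyarg i).1 hij
          have hxm : t - x i ∈ Icc (δ/2) (1:ℝ) :=
            ⟨by linarith, by linarith [htx.2, (hxS.2 i).1]⟩
          have hym : t - y i ∈ Icc (δ/2) (1:ℝ) := ⟨h2, by linarith [htx.2, (hy.2 i).1]⟩
          have hdd : dist (t - x i) (t - y i) < ηp i := by
            rw [Real.dist_eq, show t - x i - (t - y i) = -(x i - y i) by ring, abs_neg]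
            exact (hdist i).trans_le (hrp i)
          have h4 := hηpb i _ hxm _ hym hdd
          rw [Real.dist_eq] at h4
          have h5 := (abs_lt.1 h4).2
          linarith
        · have h1 := (hxarg i).2 hij
          have h2 := (hyarg i).2 hij
          have hxm : t - x i ∈ Icc (-1:ℝ) (-(δ/2)) :=
            ⟨by linarith [htx.1, (hxS.2 i).2], by linarith⟩
          have hym : t - y i ∈ Icc (-1:ℝ) (-(δ/2)) :=
            ⟨by linarith [htx.1, (hy.2 i).2], h2⟩
          have hdd : dist (t - x i) (t - y i) < ηn i := by
            rw [Real.dist_eq, show t - x i - (t - y i) = -(x i - y i) by ring, abs_neg]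
            exact (hdist i).trans_le (hrn i)
          have h4 := hηnb i _ hxm _ hym hdd
          rw [Real.dist_eq] at h4
          have h5 := (abs_lt.1 h4).2
          linarith
      have hsum : (∑ i, toR (K i) (t - x i)) ≤ (∑ i, toR (K i) (t - y i)) + (w - w₂) := by
        have hnn : (n:ℝ) ≠ 0 := ne_of_gt hn0
        calc (∑ i, toR (K i) (t - x i))
            ≤ ∑ i, (toR (K i) (t - y i) + (w - w₂)/(n:ℝ)) :=
              Finset.sum_le_sum fun i _ => hterm2 i
          _ = (∑ i, toR (K i) (t - y i)) + (n:ℝ) * ((w - w₂)/(n:ℝ)) := by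
              rw [Finset.sum_add_distrib, Finset.sum_const, Finset.card_univ,
                Fintype.card_fin, nsmul_eq_mul]
          _ = _ := by
              rw [mul_comm, div_mul_cancel₀ _ hnn]
      have hne0x : ∀ i : Fin n, t - x i ≠ 0 := by
        intro i h
        rcases lt_or_ge (i:ℕ) j with hij | hij
        · have := (hxarg i).1 hij; rw [h] at this; linarith
        · have := (hxarg i).2 hij; rw [h] at this; linarith
      have hne0y : ∀ i : Fin n, t - y i ≠ 0 := by
        intro i h
        rcases lt_or_ge (i:ℕ) j with hij | hij
        · have := (hyarg i).1 hij; rw [h] at this; linarith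
        · have := (hyarg i).2 hij; rw [h] at this; linarith
      have hcoex : (∑ i, K i (t - x i)) = ((∑ i, toR (K i) (t - x i) : ℝ) : EReal) := by
        rw [ereal_coe_sum]
        exact Finset.sum_congr rfl fun i _ =>
          kernel_coe (hK i) (sub_mem_Icc htx (hxS.2 i)) (hne0x i)
      have hcoey : (∑ i, K i (t - y i)) = ((∑ i, toR (K i) (t - y i) : ℝ) : EReal) := by
        rw [ereal_coe_sum]
        exact Finset.sum_congr rfl fun i _ =>
          kernel_coe (hK i) (sub_mem_Icc htx (hy.2 i)) (hne0y i)
      have hmjle : SOT K J y t ≤ w₂' := le_of_lt (lt_of_le_of_lt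
        (le_iSup₂ (f := fun t (_ : t ∈ Ij y j) => SOT K J y t) t hty) hw21)
      calc SOT K J x t = J t + ((∑ i, toR (K i) (t - x i) : ℝ) : EReal) := by
            rw [SOT, hcoex]
        _ ≤ J t + (((∑ i, toR (K i) (t - y i)) + (w - w₂) : ℝ) : EReal) := by
            apply add_le_add_right
            exact_mod_cast hsum
        _ = SOT K J y t + ((w - w₂ : ℝ) : EReal) := by
            rw [SOT, hcoey, EReal.coe_add, add_assoc]
        _ ≤ w₂' + ((w - w₂ : ℝ) : EReal) := add_le_add_left hmjle _
        _ = (w : EReal) := by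
            rw [← hw2e, ← EReal.coe_add]
            congr 1
            ring
    calc mj K J x j ≤ (w : EReal) := iSup₂_le key
      _ = w' := hwe
      _ < v := hw2

end
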